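/- Let D be a set with d elements listed as (e_1, ..., e_d). Then the nonempty subsets of D can be ordered (S_i : 1 ≤ i ≤ 2^d - 1) so that e_j ∈ S_i whenever i ≡ j (mod d), and such that i ≤ j implies |S_i| ≤ |S_j|. -/

import Mathlib

open scoped Fin.NatCast Fin.CommRing

namespace Stmt4Aux

open Function

variable {d : ℕ} [NeZero d]

/-- Rotation of a subset of `Fin d` by adding 1 to each element. -/
def rot (A : Finset (Fin d)) : Finset (Fin d) :=
  A.map (Equiv.addRight (1 : Fin d)).toEmbedding

lemma mem_rot {A : Finset (Fin d)} {x : Fin d} : x ∈ rot A ↔ x - 1 ∈ A := by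
  simp [rot, Finset.mem_map_equiv, sub_eq_add_neg]

lemma rot_injective : Function.Injective (rot (d := d)) := fun A B h =>
  Finset.map_injective _ h

lemma mem_rot_iterate {t : ℕ} {A : Finset (Fin d)} {x : Fin d} :
    x ∈ rot^[t] A ↔ x - (t : Fin d) ∈ A := by
  induction t generalizing x with
  | zero => simp
  | succ n ih =>
      rw [Function.iterate_succ_apply', mem_rot, ih]
      have : x - 1 - (n : Fin d) = x - ((n + 1 : ℕ) : Fin d) := by
        push_cast; ring
      rw [this]

lemma card_rot (A : Finset (Fin d)) : (rot A).card = A.card := Finset.card_map _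

lemma rot_iterate_self (A : Finset (Fin d)) : rot^[d] A = A := by
  ext x
  rw [mem_rot_iterate]
  simp [Fin.natCast_self]

lemma rot_iterate_mem {𝒮 : Finset (Finset (Fin d))} (hclosed : ∀ A ∈ 𝒮, rot A ∈ 𝒮)
    {A : Finset (Fin d)} (hA : A ∈ 𝒮) (t : ℕ) : rot^[t] A ∈ 𝒮 := by
  induction t with
  | zero => simpa
  | succ n ih => rw [Function.iterate_succ_apply']; exact hclosed _ ih

/-- Main orbit-peeling lemma: any rotation-closed family of nonempty subsets can be
listed so that the `t`-th listed set contains `↑(p+t)`. -/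
lemma lemA (n : ℕ) : ∀ (𝒮 : Finset (Finset (Fin d))), 𝒮.card ≤ n →
    (∀ A ∈ 𝒮, rot A ∈ 𝒮) → (∀ A ∈ 𝒮, A.Nonempty) → ∀ p : ℕ,
    ∃ L : List (Finset (Fin d)), L.Nodup ∧ (∀ A, A ∈ L ↔ A ∈ 𝒮) ∧
      ∀ t (h : t < L.length), ((p + t : ℕ) : Fin d) ∈ L[t] := by
  induction n with
  | zero =>
      intro 𝒮 hcard _ _ p
      refine ⟨[], by simp, fun A => ?_, by simp⟩
      simp only [List.not_mem_nil, false_iff]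
      intro hA
      have := Finset.card_eq_zero.mp (Nat.le_zero.mp hcard)
      simp [this] at hA
  | succ n ih =>
      intro 𝒮 hcard hclosed hne p
      rcases 𝒮.eq_empty_or_nonempty with rfl | ⟨B, hB⟩
      · exact ⟨[], by simp, by simp, by simp⟩
      obtain ⟨b, hb⟩ := hne B hB
      -- shift B so that it contains ↑p
      set c : Fin d := (p : Fin d) - b with hc
      set A : Finset (Fin d) := rot^[c.val] B with hAdef
      have hA𝒮 : A ∈ 𝒮 := rot_iterate_mem hclosed hB _
      have hpA : (p : Fin d) ∈ A := by
        rw [hAdef, mem_rot_iterate, Fin.cast_val_eq_self, hc]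
        simpa using hb
      have hper : IsPeriodicPt rot d A := rot_iterate_self A
      set ℓ := minimalPeriod rot A with hℓ
      have hℓpos : 0 < ℓ := hper.minimalPeriod_pos (NeZero.pos d)
      have hℓA : rot^[ℓ] A = A := isPeriodicPt_minimalPeriod rot A
      set OL : List (Finset (Fin d)) := (List.range ℓ).map (fun t => rot^[t] A) with hOL
      have hOLlen : OL.length = ℓ := by simp [hOL]
      have hOLget : ∀ t (h : t < OL.length), OL[t] = rot^[t] A := by
        intro t h; simp [hOL]
      have hOLnodup : OL.Nodup := by
        refine List.Nodup.map_on ?_ List.nodup_range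
        intro x hx y hy hxy
        exact iterate_injOn_Iio_minimalPeriod (by simpa using hx) (by simpa using hy) hxy
      have hOLmem : ∀ X, X ∈ OL ↔ ∃ t < ℓ, X = rot^[t] A := by
        intro X; simp [hOL]
      have hOsub : ∀ X ∈ OL, X ∈ 𝒮 := by
        intro X hX
        obtain ⟨t, _, rfl⟩ := (hOLmem X).mp hX
        exact rot_iterate_mem hclosed hA𝒮 t
      have hAOL : A ∈ OL := (hOLmem A).mpr ⟨0, hℓpos, rfl⟩
      set 𝒮' : Finset (Finset (Fin d)) := 𝒮.filter (fun X => X ∉ OL) with h𝒮'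
      have h𝒮'mem : ∀ X, X ∈ 𝒮' ↔ X ∈ 𝒮 ∧ X ∉ OL := by intro X; simp [h𝒮']
      have h𝒮'card : 𝒮'.card ≤ n := by
        have hss : 𝒮' ⊂ 𝒮 := by
          constructor
          · intro X hX; exact ((h𝒮'mem X).mp hX).1
          · intro hsub
            have := (h𝒮'mem A).mp (hsub hA𝒮)
            exact this.2 hAOL
        have := Finset.card_lt_card hss
        omega
      have h𝒮'closed : ∀ X ∈ 𝒮', rot X ∈ 𝒮' := by
        intro X hX
        obtain ⟨hX𝒮, hXO⟩ := (h𝒮'mem X).mp hX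
        refine (h𝒮'mem _).mpr ⟨hclosed _ hX𝒮, ?_⟩
        intro hrot
        apply hXO
        obtain ⟨t, ht, hteq⟩ := (hOLmem _).mp hrot
        rcases Nat.eq_zero_or_pos t with rfl | htpos
        · -- rot X = A = rot^[ℓ] A = rot (rot^[ℓ-1] A)
          have key : rot^[ℓ] A = rot (rot^[ℓ - 1] A) := by
            conv_lhs => rw [show ℓ = (ℓ - 1) + 1 by omega]
            exact Function.iterate_succ_apply' rot (ℓ - 1) A
          have : rot X = rot (rot^[ℓ - 1] A) := by
            rw [hteq, Function.iterate_zero_apply, ← key, hℓA]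
          have := rot_injective this
          exact (hOLmem X).mpr ⟨ℓ - 1, by omega, this⟩
        · have key : rot^[t] A = rot (rot^[t - 1] A) := by
            conv_lhs => rw [show t = (t - 1) + 1 by omega]
            exact Function.iterate_succ_apply' rot (t - 1) A
          have : rot X = rot (rot^[t - 1] A) := by rw [hteq, key]
          have := rot_injective this
          exact (hOLmem X).mpr ⟨t - 1, by omega, this⟩
      have h𝒮'ne : ∀ X ∈ 𝒮', X.Nonempty := fun X hX => hne X ((h𝒮'mem X).mp hX).1
      obtain ⟨L', hL'nodup, hL'mem, hL'pos⟩ := ih 𝒮' h𝒮'card h𝒮'closed h𝒮'ne (p + ℓ)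
      refine ⟨OL ++ L', ?_, ?_, ?_⟩
      · refine List.Nodup.append hOLnodup hL'nodup ?_
        intro X hX1 hX2
        exact (((h𝒮'mem X).mp ((hL'mem X).mp hX2)).2) hX1
      · intro X
        rw [List.mem_append, hL'mem, h𝒮'mem]
        constructor
        · rintro (h | ⟨h, _⟩)
          · exact hOsub X h
          · exact h
        · intro h
          by_cases hXO : X ∈ OL
          · exact Or.inl hXO
          · exact Or.inr ⟨h, hXO⟩
      · intro t h
        rcases Nat.lt_or_ge t ℓ with htℓ | htℓ
        · rw [List.getElem_append_left (by omega), hOLget t (by omega), mem_rot_iterate]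
          have : ((p + t : ℕ) : Fin d) - (t : Fin d) = (p : Fin d) := by
            push_cast; ring
          rw [this]; exact hpA
        · have h' : t - OL.length < L'.length := by
            rw [List.length_append] at h; omega
          rw [List.getElem_append_right (by omega)]
          have := hL'pos (t - OL.length) h'
          have harg : p + ℓ + (t - OL.length) = p + t := by
            rw [hOLlen] at *; omega
          rwa [harg] at this

/-- Build the list of all nonempty subsets of card ≤ k, sorted by cardinality. -/
lemma lemB (k : ℕ) :
    ∃ L : List (Finset (Fin d)), L.Nodup ∧
      (∀ A, A ∈ L ↔ A.Nonempty ∧ A.card ≤ k) ∧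
      (∀ t (h : t < L.length), ((t : ℕ) : Fin d) ∈ L[t]) ∧
      (∀ s t (hst : s ≤ t) (ht : t < L.length), (L[s]'(lt_of_le_of_lt hst ht)).card ≤ (L[t]).card) := by
  induction k with
  | zero =>
      refine ⟨[], by simp, fun A => ?_, by simp, by simp⟩
      simp only [List.not_mem_nil, false_iff]
      rintro ⟨hne, hcard⟩
      simp [Finset.card_eq_zero.mp (Nat.le_zero.mp hcard)] at hne
  | succ k ih =>
      obtain ⟨L, hnodup, hmem, hpos, hmono⟩ := ih
      set 𝒮 : Finset (Finset (Fin d)) := Finset.univ.filter (fun A => A.card = k + 1) with h𝒮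
      have h𝒮mem : ∀ A, A ∈ 𝒮 ↔ A.card = k + 1 := by intro A; simp [h𝒮]
      have hclosed : ∀ A ∈ 𝒮, rot A ∈ 𝒮 := by
        intro A hA
        rw [h𝒮mem] at *
        rw [card_rot]; exact hA
      have hne : ∀ A ∈ 𝒮, A.Nonempty := by
        intro A hA
        rw [h𝒮mem] at hA
        exact Finset.card_pos.mp (by omega)
      obtain ⟨L', hL'nodup, hL'mem, hL'pos⟩ := lemA 𝒮.card 𝒮 le_rfl hclosed hne L.length
      have hLcard : ∀ A ∈ L, A.card ≤ k := fun A hA => ((hmem A).mp hA).2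
      have hL'card : ∀ A ∈ L', A.card = k + 1 := fun A hA => (h𝒮mem A).mp ((hL'mem A).mp hA)
      refine ⟨L ++ L', ?_, ?_, ?_, ?_⟩
      · refine List.Nodup.append hnodup hL'nodup ?_
        intro X hX1 hX2
        have := hLcard X hX1
        have := hL'card X hX2
        omega
      · intro A
        rw [List.mem_append, hmem, hL'mem, h𝒮mem]
        constructor
        · rintro (⟨h1, h2⟩ | h)
          · exact ⟨h1, by omega⟩
          · exact ⟨Finset.card_pos.mp (by omega), by omega⟩
        · rintro ⟨h1, h2⟩
          rcases Nat.lt_or_ge A.card (k + 1) with h | h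
          · exact Or.inl ⟨h1, by omega⟩
          · exact Or.inr (by omega)
      · intro t h
        rcases Nat.lt_or_ge t L.length with htL | htL
        · rw [List.getElem_append_left htL]
          exact hpos t htL
        · have h' : t - L.length < L'.length := by
            rw [List.length_append] at h; omega
          rw [List.getElem_append_right (by omega)]
          have := hL'pos (t - L.length) h'
          have harg : L.length + (t - L.length) = t := by omega
          rwa [harg] at this
      · intro s t hst ht
        have hs := lt_of_le_of_lt hst ht
        rcases Nat.lt_or_ge t L.length with htL | htL
        · rw [List.getElem_append_left htL, List.getElem_append_left (lt_of_le_of_lt hst htL)]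
          exact hmono s t hst htL
        · rw [List.getElem_append_right htL]
          have ht' : t - L.length < L'.length := by rw [List.length_append] at ht; omega
          have hcardt : (L'[t - L.length]'ht').card = k + 1 :=
            hL'card _ (List.getElem_mem _)
          rcases Nat.lt_or_ge s L.length with hsL | hsL
          · rw [List.getElem_append_left hsL]
            have := hLcard _ (List.getElem_mem (l := L) (n := s) hsL)
            omega
          · rw [List.getElem_append_right hsL]
            have hs' : s - L.length < L'.length := by rw [List.length_append] at hs; omega
            have := hL'card _ (List.getElem_mem (l := L') (n := s - L.length) hs')
            omega

end Stmt4Aux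

theorem stmt_4 {α : Type*} [Fintype α] [DecidableEq α] (d : ℕ) (hd : 0 < d)
    (hcard : Fintype.card α = d) (e : Fin d ≃ α) :
    ∃ S : Fin (2 ^ d - 1) → Finset α,
      Function.Injective S ∧
      (∀ T : Finset α, T.Nonempty → ∃ i, S i = T) ∧
      (∀ i, (S i).Nonempty) ∧
      (∀ i : Fin (2 ^ d - 1), ∀ j : Fin d, (i : ℕ) % d = (j : ℕ) → e j ∈ S i) ∧
      (∀ i j : Fin (2 ^ d - 1), i ≤ j → (S i).card ≤ (S j).card) := by
  haveI : NeZero d := ⟨hd.ne'⟩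
  obtain ⟨L, hnodup, hmem, hpos, hmono⟩ := Stmt4Aux.lemB (d := d) d
  have hmem' : ∀ A : Finset (Fin d), A ∈ L ↔ A.Nonempty := by
    intro A
    rw [hmem]
    have : A.card ≤ d := by
      simpa using Finset.card_le_univ A
    tauto
  have hlen : L.length = 2 ^ d - 1 := by
    have h1 : L.toFinset.card = L.length := List.toFinset_card_of_nodup hnodup
    have h2 : L.toFinset = Finset.univ.erase (∅ : Finset (Fin d)) := by
      ext A
      simp [hmem' A, Finset.nonempty_iff_ne_empty]
    rw [h2] at h1
    rw [← h1, Finset.card_erase_of_mem (Finset.mem_univ _)]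
    simp [Finset.card_univ]
  set S : Fin (2 ^ d - 1) → Finset α :=
    fun i => (L[(i : ℕ)]'(by rw [hlen]; exact i.isLt)).map e.toEmbedding with hS
  have hSget : ∀ i : Fin (2 ^ d - 1), S i = (L[(i : ℕ)]'(by rw [hlen]; exact i.isLt)).map e.toEmbedding := fun i => rfl
  refine ⟨S, ?_, ?_, ?_, ?_, ?_⟩
  · intro i j hij
    rw [hSget, hSget] at hij
    have := Finset.map_injective e.toEmbedding hij
    have := (hnodup.getElem_inj_iff).mp this
    exact Fin.ext this
  · intro T hT
    set A : Finset (Fin d) := T.map e.symm.toEmbedding with hA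
    have hAne : A.Nonempty := hT.map
    obtain ⟨n, hn, hget⟩ := List.mem_iff_getElem.mp ((hmem' A).mpr hAne)
    refine ⟨⟨n, by rw [← hlen]; exact hn⟩, ?_⟩
    rw [hSget]
    simp only [hget, hA]
    ext x
    simp [Finset.mem_map_equiv]
  · intro i
    rw [hSget]
    have := hpos (i : ℕ) (by rw [hlen]; exact i.isLt)
    exact ⟨e _, Finset.mem_map_of_mem _ this⟩
  · intro i j hij
    rw [hSget]
    have hmemL := hpos (i : ℕ) (by rw [hlen]; exact i.isLt)
    have : (((i : ℕ) : Fin d)) = j := by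
      apply Fin.ext
      rw [Fin.val_natCast]
      exact hij
    rw [this] at hmemL
    exact Finset.mem_map_of_mem _ hmemL
  · intro i j hij
    rw [hSget, hSget, Finset.card_map, Finset.card_map]
    exact hmono (i : ℕ) (j : ℕ) hij (by rw [hlen]; exact j.isLt)
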